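/- For any real N-by-P matrix X (N ≥ P) and any P-by-K matrix L with K ≤ P, the minimum over Z with Z^T Z = I_K of ||X - Z L^T||_F^2 equals tr(X^T X) + tr(L^T L) - 2||X L||_*, where ||·||_* is the nuclear norm. -/

import Mathlib

open Matrix

noncomputable def frobSq {n p : ℕ} (A : Matrix (Fin n) (Fin p) ℝ) : ℝ := ∑ i, ∑ j, (A i j)^2

open Classical in
/-- The unique positive semidefinite square root of a PSD matrix (junk value `0` otherwise). -/
noncomputable def msqrt {p : ℕ} (M : Matrix (Fin p) (Fin p) ℝ) : Matrix (Fin p) (Fin p) ℝ :=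
  if h : M.PosSemidef then
    h.1.eigenvectorUnitary.1 * diagonal ((RCLike.ofReal : ℝ → ℝ) ∘ Real.sqrt ∘ h.1.eigenvalues) *
      (star h.1.eigenvectorUnitary : Matrix (Fin p) (Fin p) ℝ)
  else 0

/-- Nuclear norm: sum of singular values, i.e. trace of the PSD square root of `Aᵀ * A`. -/
noncomputable def nuclearNorm {m n : ℕ} (A : Matrix (Fin m) (Fin n) ℝ) : ℝ :=
  (msqrt (A.transpose * A)).trace

lemma frobSq_eq_trace {n p : ℕ} (A : Matrix (Fin n) (Fin p) ℝ) :
    frobSq A = (A.transpose * A).trace := by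
  simp only [frobSq, Matrix.trace, Matrix.diag, Matrix.mul_apply, Matrix.transpose_apply, sq]
  exact Finset.sum_comm

lemma psd_tMul {m n : ℕ} (M : Matrix (Fin m) (Fin n) ℝ) : (M.transpose * M).PosSemidef := by
  have := Matrix.posSemidef_conjTranspose_mul_self M
  rwa [Matrix.conjTranspose_eq_transpose_of_trivial] at this

lemma key {N K : ℕ} (hKN : K ≤ N) (M : Matrix (Fin N) (Fin K) ℝ) :
    ∃ Z₀ : Matrix (Fin N) (Fin K) ℝ, Z₀.transpose * Z₀ = 1 ∧
      (Z₀.transpose * M).trace = nuclearNorm M ∧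
      ∀ Z : Matrix (Fin N) (Fin K) ℝ, Z.transpose * Z = 1 →
        (Z.transpose * M).trace ≤ nuclearNorm M := by
  classical
  have hPSD : (M.transpose * M).PosSemidef := psd_tMul M
  set hH : (M.transpose * M).IsHermitian := hPSD.1 with hHdef
  set μ : Fin K → ℝ := hH.eigenvalues with hμdef
  set σ : Fin K → ℝ := fun i => Real.sqrt (μ i) with hσdef
  set V : Matrix (Fin K) (Fin K) ℝ := (hH.eigenvectorUnitary : Matrix (Fin K) (Fin K) ℝ) with hVdef
  have hμ0 : ∀ i, 0 ≤ μ i := hPSD.eigenvalues_nonneg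
  have hσ0 : ∀ i, 0 ≤ σ i := fun i => Real.sqrt_nonneg _
  have hσsq : ∀ i, σ i ^ 2 = μ i := fun i => Real.sq_sqrt (hμ0 i)
  have hstarV : star V = V.transpose := by
    rw [Matrix.star_eq_conjTranspose, Matrix.conjTranspose_eq_transpose_of_trivial]
  have hVV : V.transpose * V = 1 := by
    rw [← hstarV]; exact Matrix.mem_unitaryGroup_iff'.mp hH.eigenvectorUnitary.2
  have hVV' : V * V.transpose = 1 := by
    rw [← hstarV]; exact Matrix.mem_unitaryGroup_iff.mp hH.eigenvectorUnitary.2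
  -- diagonalization
  have hD : (M * V).transpose * (M * V) = Matrix.diagonal μ := by
    have := hH.conjStarAlgAut_star_eigenvectorUnitary
    rw [Unitary.conjStarAlgAut_star_apply] at this
    rw [hstarV] at this
    calc (M * V).transpose * (M * V)
        = V.transpose * (M.transpose * M) * V := by
          rw [Matrix.transpose_mul]; simp only [Matrix.mul_assoc]
      _ = Matrix.diagonal (RCLike.ofReal ∘ μ) := this
      _ = Matrix.diagonal μ := by norm_num [Function.comp]
  have hcol : ∀ i, ∑ a, (M * V) a i ^ 2 = μ i := by
    intro i
    have h := congrFun (congrFun hD i) i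
    simp only [Matrix.mul_apply, Matrix.transpose_apply, Matrix.diagonal_apply_eq] at h
    simpa [sq, Matrix.mul_apply] using h
  have hzero : ∀ i, μ i = 0 → ∀ a, (M * V) a i = 0 := by
    intro i h0 a
    have h := hcol i
    rw [h0] at h
    have := (Finset.sum_eq_zero_iff_of_nonneg
      (fun a _ => sq_nonneg ((M * V) a i))).mp h a (Finset.mem_univ a)
    exact pow_eq_zero_iff (two_ne_zero) |>.mp this
  have hsumσ : ∀ i j, ∑ a, (M * V) a i * (M * V) a j = if i = j then μ i else 0 := by
    intro i j
    have h := congrFun (congrFun hD i) j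
    simp only [Matrix.mul_apply, Matrix.transpose_apply, Matrix.diagonal_apply] at h
    exact h
  have hσne : ∀ i, μ i ≠ 0 → σ i ≠ 0 := by
    intro i h
    simp only [hσdef]
    exact Real.sqrt_ne_zero'.mpr (lt_of_le_of_ne (hμ0 i) (Ne.symm h))
  have hinner : ∀ x y : EuclideanSpace ℝ (Fin N), (inner ℝ x y : ℝ) = ∑ a, x a * y a := by
    intro x y
    simp [PiLp.inner_apply, RCLike.inner_apply, conj_trivial, mul_comm]
  set e : Fin K → Fin N := Fin.castLE hKN with hedef
  have he : Function.Injective e := Fin.castLE_injective hKN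
  set uvec : Fin K → EuclideanSpace ℝ (Fin N) :=
    fun i => (σ i)⁻¹ • (WithLp.toLp 2 (fun a => (M * V) a i) : EuclideanSpace ℝ (Fin N)) with huvecdef
  have huvapp : ∀ i a, uvec i a = (σ i)⁻¹ * (M * V) a i := fun i a => rfl
  have hinneru : ∀ i i', μ i ≠ 0 → μ i' ≠ 0 →
      (inner ℝ (uvec i) (uvec i') : ℝ) = if i = i' then 1 else 0 := by
    intro i i' hi hi'
    rw [hinner]
    have h1 : ∀ a, uvec i a * uvec i' a
        = (σ i)⁻¹ * (σ i')⁻¹ * ((M * V) a i * (M * V) a i') := by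
      intro a; rw [huvapp, huvapp]; ring
    rw [Finset.sum_congr rfl fun a _ => h1 a, ← Finset.mul_sum, hsumσ]
    by_cases h : i = i'
    · subst h
      simp only [if_pos rfl]
      have := hσsq i
      have hne := hσne i hi
      field_simp
      simp only [if_true, mul_one]
      nlinarith [hσsq i]
    · simp [h]
  set s : Set (Fin N) := {j | ∃ h : (j : ℕ) < K, μ ⟨j, h⟩ ≠ 0} with hsdef
  set v : Fin N → EuclideanSpace ℝ (Fin N) :=
    fun j => if h : (j : ℕ) < K then uvec ⟨j, h⟩ else 0 with hvdef
  have hON : Orthonormal ℝ (s.restrict v) := by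
    rw [orthonormal_iff_ite]
    rintro ⟨j, hj, hμj⟩ ⟨j', hj', hμj'⟩
    simp only [Set.restrict_apply, Set.restrict, hvdef, dif_pos hj, dif_pos hj']
    rw [hinneru _ _ hμj hμj']
    congr 1
    simp [Subtype.mk.injEq, Fin.ext_iff]
  obtain ⟨b, hb⟩ := hON.exists_orthonormalBasis_extension_of_card_eq (by simp)
  have hbON := b.orthonormal
  rw [orthonormal_iff_ite] at hbON
  set U : Matrix (Fin N) (Fin K) ℝ := Matrix.of (fun a i => b (e i) a) with hUdef
  have hUU : U.transpose * U = 1 := by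
    ext i j
    have h := hbON (e i) (e j)
    rw [hinner] at h
    simp only [Matrix.mul_apply, Matrix.transpose_apply, Matrix.one_apply, hUdef,
      Matrix.of_apply]
    rw [h]
    simp [he.eq_iff]
  have hMV : M * V = U * Matrix.diagonal σ := by
    ext a i
    rw [Matrix.mul_diagonal]
    by_cases h0 : μ i = 0
    · have hσ : σ i = 0 := by simp [hσdef, h0]
      rw [hzero i h0 a, hσ, mul_zero]
    · have hei : e i ∈ s := by
        refine ⟨i.isLt, ?_⟩
        exact h0
      have hbe : b (e i) = v (e i) := hb _ hei
      have hv : v (e i) = uvec i := by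
        rw [hvdef]
        simp only []
        rw [dif_pos (show ((e i : Fin N) : ℕ) < K from i.isLt)]
        rfl
      have hU : U a i = (σ i)⁻¹ * (M * V) a i := by
        rw [hUdef, Matrix.of_apply, hbe, hv, huvapp]
      rw [hU]
      field_simp [hσne i h0]
  have hNN : nuclearNorm M = ∑ i, σ i := by
    rw [nuclearNorm, msqrt, dif_pos hPSD]
    rw [Matrix.trace_mul_cycle]
    rw [show (star hPSD.1.eigenvectorUnitary : Matrix (Fin K) (Fin K) ℝ) *
        hPSD.1.eigenvectorUnitary.1 = 1 from
      Matrix.mem_unitaryGroup_iff'.mp hPSD.1.eigenvectorUnitary.2]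
    rw [Matrix.one_mul, Matrix.trace_diagonal]
    rfl
  refine ⟨U * V.transpose, ?_, ?_, ?_⟩
  · rw [Matrix.transpose_mul, Matrix.transpose_transpose]
    calc V * U.transpose * (U * V.transpose)
        = V * (U.transpose * U) * V.transpose := by simp only [Matrix.mul_assoc]
      _ = 1 := by rw [hUU, Matrix.mul_one, hVV']
  · rw [hNN, Matrix.transpose_mul, Matrix.transpose_transpose,
      Matrix.trace_mul_cycle, hMV, Matrix.trace_mul_cycle, hUU,
      Matrix.one_mul, Matrix.trace_diagonal]
  · intro Z hZ
    rw [hNN]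
    set W : Matrix (Fin N) (Fin K) ℝ := Z * V with hWdef
    have hWW : W.transpose * W = 1 := by
      rw [hWdef, Matrix.transpose_mul]
      calc V.transpose * Z.transpose * (Z * V)
          = V.transpose * (Z.transpose * Z) * V := by simp only [Matrix.mul_assoc]
        _ = 1 := by rw [hZ, Matrix.mul_one, hVV]
    have hM' : Z.transpose * M = Z.transpose * (U * Matrix.diagonal σ) * V.transpose := by
      calc Z.transpose * M = Z.transpose * (M * V * V.transpose) := by
            conv_rhs => rw [Matrix.mul_assoc, hVV', Matrix.mul_one]
        _ = _ := by rw [hMV]; simp only [Matrix.mul_assoc]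
    have htr : (Z.transpose * M).trace = ∑ i, (∑ a, W a i * U a i) * σ i := by
      rw [hM', Matrix.trace_mul_cycle]
      have hassoc : V.transpose * Z.transpose * (U * Matrix.diagonal σ)
          = (W.transpose * U) * Matrix.diagonal σ := by
        rw [hWdef, Matrix.transpose_mul]; simp only [Matrix.mul_assoc]
      rw [hassoc, Matrix.trace]
      simp only [Matrix.diag, Matrix.mul_apply, Matrix.transpose_apply]
      simp [Matrix.diagonal_apply]
    rw [htr]
    apply Finset.sum_le_sum
    intro i _
    have hWn : ∑ a, W a i ^ 2 = 1 := by
      have h := congrFun (congrFun hWW i) i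
      simp only [Matrix.mul_apply, Matrix.transpose_apply, Matrix.one_apply_eq] at h
      simpa [sq] using h
    have hUn : ∑ a, U a i ^ 2 = 1 := by
      have h := congrFun (congrFun hUU i) i
      simp only [Matrix.mul_apply, Matrix.transpose_apply, Matrix.one_apply_eq] at h
      simpa [sq] using h
    have hcs := Finset.sum_mul_sq_le_sq_mul_sq Finset.univ (fun a => W a i) (fun a => U a i)
    rw [hWn, hUn, mul_one] at hcs
    have hle1 : ∑ a, W a i * U a i ≤ 1 := by nlinarith [hcs]
    exact mul_le_of_le_one_left (hσ0 i) hle1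


lemma expandFrob {N P K : ℕ} (X : Matrix (Fin N) (Fin P) ℝ) (L : Matrix (Fin P) (Fin K) ℝ)
    (Z : Matrix (Fin N) (Fin K) ℝ) (hZ : Z.transpose * Z = 1) :
    frobSq (X - Z * L.transpose)
      = (X.transpose * X).trace + (L.transpose * L).trace
        - 2 * (Z.transpose * (X * L)).trace := by
  rw [frobSq_eq_trace, Matrix.transpose_sub, Matrix.sub_mul, Matrix.mul_sub, Matrix.mul_sub,
    Matrix.trace_sub, Matrix.trace_sub, Matrix.trace_sub]
  have hA : (Z * L.transpose).transpose = L * Z.transpose := by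
    rw [Matrix.transpose_mul, Matrix.transpose_transpose]
  have h2 : ((Z * L.transpose).transpose * (Z * L.transpose)).trace
      = (L.transpose * L).trace := by
    rw [hA]
    have h : L * Z.transpose * (Z * L.transpose) = L * L.transpose := by
      calc L * Z.transpose * (Z * L.transpose)
          = L * (Z.transpose * Z * L.transpose) := by simp only [Matrix.mul_assoc]
        _ = _ := by rw [hZ, Matrix.one_mul]
    rw [h, Matrix.trace_mul_comm]
  have h3 : ((Z * L.transpose).transpose * X).trace = (Z.transpose * (X * L)).trace := by
    rw [hA, Matrix.trace_mul_cycle, Matrix.trace_mul_comm]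
  have h4 : (X.transpose * (Z * L.transpose)).trace = (Z.transpose * (X * L)).trace := by
    rw [← Matrix.trace_transpose (X.transpose * (Z * L.transpose)), Matrix.transpose_mul,
      Matrix.transpose_transpose]
    exact h3
  rw [h2, h3, h4]; ring

/-- The minimum of `‖X - Z Lᵀ‖_F²` over `Z` with orthonormal columns equals
`tr(Xᵀ X) + tr(Lᵀ L) - 2 ‖X L‖_*`. -/
theorem stmt19 {N P K : ℕ} (hPN : P ≤ N) (hKP : K ≤ P)
    (X : Matrix (Fin N) (Fin P) ℝ) (L : Matrix (Fin P) (Fin K) ℝ) :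
    ∃ Z₀ : Matrix (Fin N) (Fin K) ℝ, Z₀.transpose * Z₀ = 1 ∧
      frobSq (X - Z₀ * L.transpose)
        = (X.transpose * X).trace + (L.transpose * L).trace - 2 * nuclearNorm (X * L) ∧
      ∀ Z : Matrix (Fin N) (Fin K) ℝ, Z.transpose * Z = 1 →
        (X.transpose * X).trace + (L.transpose * L).trace - 2 * nuclearNorm (X * L)
          ≤ frobSq (X - Z * L.transpose) := by
  obtain ⟨Z₀, hZ₀, htr, hmax⟩ := key (hKP.trans hPN) (X * L)
  refine ⟨Z₀, hZ₀, ?_, ?_⟩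
  · rw [expandFrob X L Z₀ hZ₀, htr]
  · intro Z hZ
    rw [expandFrob X L Z hZ]
    have := hmax Z hZ
    linarith
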